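/- Let n ≥ 2, let z_1, …, z_n be pairwise distinct complex numbers, let Γ_1, …, Γ_n ∈ ℂ, and let k ≥ 1 be an integer. Then Σ_{j=1}^n Γ_j z_j^{k−1} Σ_{i≠j} Γ_i/(z_j − z_i) = Σ_{1≤i<j≤n} Γ_i Γ_j Σ_{r,s≥0, r+s=k−2} z_i^r z_j^s, where the right-hand side is 0 when k = 1 (and equals Σ_{i<j} Γ_i Γ_j when k = 2). -/

import Mathlib

open Finset

lemma geom_pair (k : ℕ) (hk : 1 ≤ k) (a b : ℂ) (hab : a ≠ b) :
    b ^ (k-1) / (b - a) + a ^ (k-1) / (a - b)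
    = if k = 1 then 0 else ∑ p ∈ Finset.HasAntidiagonal.antidiagonal (k - 2), a ^ p.1 * b ^ p.2 := by
  have hba : b - a ≠ 0 := sub_ne_zero.mpr (Ne.symm hab)
  have hab' : a - b ≠ 0 := sub_ne_zero.mpr hab
  rcases eq_or_lt_of_le hk with h | h
  · rw [if_pos h.symm, ← h]
    field_simp
    ring
  · rw [if_neg (by omega), Finset.Nat.sum_antidiagonal_eq_sum_range_succ_mk]
    have hg := geom_sum₂_mul a b (k-1)
    have h1 : k - 2 + 1 = k - 1 := by omega
    have h2 : ∀ i, k - 1 - 1 - i = k - 2 - i := by intro i; omega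
    simp only [h2] at hg
    simp only [Nat.succ_eq_add_one, h1]
    have hs : (∑ x ∈ Finset.range (k-1), a ^ x * b ^ (k - 2 - x))
        = (a^(k-1)-b^(k-1))/(a-b) := (eq_div_iff hab').mpr hg
    rw [hs]
    field_simp
    ring

lemma pair_sum {n : ℕ} (F : Fin n → Fin n → ℂ) :
    ∑ j, ∑ i ∈ Finset.univ.erase j, F i j
    = ∑ i, ∑ j, if i < j then F i j + F j i else 0 := by
  have h1 : ∀ j : Fin n, ∑ i ∈ Finset.univ.erase j, F i j
      = ∑ i, ((if i < j then F i j else 0) + (if j < i then F i j else 0)) := by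
    intro j
    have : Finset.univ.erase j = Finset.univ.filter (· ≠ j) := by
      ext i; simp [Finset.mem_erase, and_comm]
    rw [this, Finset.sum_filter]
    refine Finset.sum_congr rfl fun i _ => ?_
    rcases lt_trichotomy i j with h | h | h
    · simp [h, h.ne, not_lt_of_gt h]
    · simp [h]
    · simp [h, h.ne', not_lt_of_gt h]
  simp only [h1, Finset.sum_add_distrib]
  rw [Finset.sum_comm (f := fun x y => if y < x then F y x else 0),
    ← Finset.sum_add_distrib]
  refine Finset.sum_congr rfl fun i _ => ?_
  rw [← Finset.sum_add_distrib]
  refine Finset.sum_congr rfl fun j _ => ?_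
  split_ifs <;> simp

/-- for pairwise distinct `z_1, …, z_n` and any `Γ_1, …, Γ_n ∈ ℂ`
and `k ≥ 1`,
`Σ_j Γ_j z_j^{k−1} Σ_{i≠j} Γ_i/(z_j − z_i)
  = Σ_{i<j} Γ_i Γ_j Σ_{r+s=k−2} z_i^r z_j^s`,
the right-hand side being `0` when `k = 1`. -/
theorem key_identity
    (n : ℕ) (hn : 2 ≤ n) (z : Fin n → ℂ) (hz : ∀ i j, i ≠ j → z i ≠ z j)
    (Γ : Fin n → ℂ) (k : ℕ) (hk : 1 ≤ k) :
    ∑ j, Γ j * z j ^ (k - 1) *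
        ∑ i ∈ Finset.univ.erase j, Γ i / (z j - z i)
    = if k = 1 then 0
      else ∑ i, ∑ j, if i < j then
          Γ i * Γ j * ∑ p ∈ Finset.HasAntidiagonal.antidiagonal (k - 2), z i ^ p.1 * z j ^ p.2
        else 0 := by
  have hmain : ∑ j, Γ j * z j ^ (k - 1) * ∑ i ∈ Finset.univ.erase j, Γ i / (z j - z i)
      = ∑ i, ∑ j, if i < j then Γ i * Γ j *
          (if k = 1 then 0
            else ∑ p ∈ Finset.HasAntidiagonal.antidiagonal (k - 2), z i ^ p.1 * z j ^ p.2) else 0 := by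
    rw [show (∑ j, Γ j * z j ^ (k-1) * ∑ i ∈ Finset.univ.erase j, Γ i / (z j - z i))
        = ∑ j, ∑ i ∈ Finset.univ.erase j, Γ j * z j ^ (k-1) * (Γ i / (z j - z i)) from
        Finset.sum_congr rfl fun j _ => Finset.mul_sum _ _ _]
    rw [pair_sum]
    refine Finset.sum_congr rfl fun i _ => Finset.sum_congr rfl fun j _ => ?_
    by_cases hij : i < j
    · rw [if_pos hij, if_pos hij, ← geom_pair k hk (z i) (z j) (hz i j hij.ne)]
      ring
    · rw [if_neg hij, if_neg hij]
  rw [hmain]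
  by_cases h1 : k = 1
  · simp [h1]
  · simp only [if_neg h1]
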